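/- arXiv:1612.04900 — 2 statements merged into one kernel-verified Lean document; each statement's English description precedes it below -/
import Mathlib

section
/- Work in the formal power series ring over ℚ in the variables t, z_a (a ∈ ℙ) and x_{ab} (a,b ∈ ℙ). Let D = Σ_{w∈ℙ^*} t^{|w|} z̄^w ∏_{i<j} x_{ji}^{ji(w)}, where ji(w) is the number of positions s with w_s = j and w_{s+1} = i (so each descent of w contributes the factor x indexed by its descent pair). For a finite nonempty S ⊆ ℙ put DXZ(S) = z_a if S = {a}, and DXZ(S) = z_{j_1}⋯z_{j_k} ∏_{i=1}^{k−1}(x_{j_{i+1} j_i} − 1) if S = {j_1 < ⋯ < j_k} with k ≥ 2. Then D · (1 − Σ_{n≥1} t^n Σ_{S⊆ℙ, |S|=n} DXZ(S)) = 1; that is, D = 1/(1 − Σ_{n≥1} t^n Σ_{S⊆ℙ, |S|=n} DXZ(S)). -/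
noncomputable section

/-- The variables: `t`, the `z_a` for `a ∈ ℙ`, and the `x_{a b}` for `a, b ∈ ℙ`. -/
inductive Var : Type
  | t : Var
  | z : ℕ+ → Var
  | x : ℕ+ → ℕ+ → Var
  deriving DecidableEq

/-- The ring of formal power series over `ℚ` in the variables `t`, `z_a`, `x_{a b}`. -/
abbrev PS : Type := MvPowerSeries Var ℚ

instance : TopologicalSpace PS := Pi.topologicalSpace

def tt : PS := MvPowerSeries.X Var.t
def zz (a : ℕ+) : PS := MvPowerSeries.X (Var.z a)
def xx (a b : ℕ+) : PS := MvPowerSeries.X (Var.x a b)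

/-- `z̄^w = z_{w_1} ⋯ z_{w_n}`. -/
def zbar (w : List ℕ+) : PS := (w.map zz).prod

/-- `∏_{i<j} x_{ji}^{ji(w)}`: one factor `x_{w_s w_{s+1}}` for every descent position `s` of `w`. -/
def descFactor (w : List ℕ+) : PS :=
  ((w.zip w.tail).map fun p => if p.2 < p.1 then xx p.1 p.2 else 1).prod

/-- `DXZ(S)`: for `S = {j_1 < ⋯ < j_k}` this is
`z_{j_1} ⋯ z_{j_k} ∏_{i=1}^{k-1} (x_{j_{i+1} j_i} - 1)` (so just `z_j` when `S = {j}`). -/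
def DXZ (S : Finset ℕ+) : PS :=
  (∏ a ∈ S, zz a) *
    (((S.sort (· ≤ ·)).zip (S.sort (· ≤ ·)).tail).map fun p => xx p.2 p.1 - 1).prod

/-! ### Topological instances -/

instance : T3Space PS := inferInstanceAs (T3Space ((Var →₀ ℕ) → ℚ))
instance : ContinuousAdd PS := inferInstanceAs (ContinuousAdd ((Var →₀ ℕ) → ℚ))
instance : ContinuousNeg PS := inferInstanceAs (ContinuousNeg ((Var →₀ ℕ) → ℚ))

instance : ContinuousMul PS := by
  constructor
  apply continuous_pi
  intro m
  have h : (fun p : PS × PS => (p.1 * p.2) m)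
      = fun p : PS × PS => ∑ q ∈ Finset.HasAntidiagonal.antidiagonal m, p.1 q.1 * p.2 q.2 := by
    funext p
    exact MvPowerSeries.coeff_mul (n := m) (φ := p.1) (ψ := p.2)
  rw [show (fun p : PS × PS => (p.1 * p.2) m) = _ from h]
  exact continuous_finset_sum _ fun q _ =>
    ((continuous_apply q.1).comp continuous_fst).mul ((continuous_apply q.2).comp continuous_snd)

instance : IsTopologicalSemiring PS := ⟨⟩
instance : IsTopologicalAddGroup PS := ⟨⟩

/-! ### Auxiliary definitions -/

instance (R : ℕ+ → ℕ+ → Prop) [DecidableRel R] (l : List ℕ+) : Decidable (List.Chain' R l) :=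
  inferInstanceAs (Decidable (l.IsChain R))

/-- `∏ (x_{v_s v_{s+1}} - 1)` over consecutive pairs of `v`. -/
def xm1 (v : List ℕ+) : PS := ((v.zip v.tail).map fun p => xx p.1 p.2 - 1).prod

/-- The decreasing sort of a finset. -/
def dsc (S : Finset ℕ+) : List ℕ+ := (S.sort (· ≤ ·)).reverse

def FF (w : List ℕ+) : PS := tt ^ w.length * zbar w * descFactor w

def GG (S : {S : Finset ℕ+ // S.Nonempty}) : PS := tt ^ S.1.card * DXZ S.1

def phi (p : List ℕ+ × {S : Finset ℕ+ // S.Nonempty}) : List ℕ+ := p.1 ++ dsc p.2.1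

/-! ### Elementary list computations -/

lemma descFactor_nil : descFactor [] = 1 := rfl
lemma descFactor_singleton (a : ℕ+) : descFactor [a] = 1 := rfl

lemma descFactor_cons_cons (a b : ℕ+) (t : List ℕ+) :
    descFactor (a :: b :: t) = (if b < a then xx a b else 1) * descFactor (b :: t) := by
  simp [descFactor]

lemma xm1_nil : xm1 [] = 1 := rfl
lemma xm1_singleton (a : ℕ+) : xm1 [a] = 1 := rfl

lemma xm1_cons_cons (a b : ℕ+) (t : List ℕ+) :
    xm1 (a :: b :: t) = (xx a b - 1) * xm1 (b :: t) := by
  simp [xm1]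

lemma zbar_nil : zbar [] = 1 := rfl

lemma zbar_cons (a : ℕ+) (l : List ℕ+) : zbar (a :: l) = zz a * zbar l := by
  simp [zbar]

lemma zbar_append (v w : List ℕ+) : zbar (v ++ w) = zbar v * zbar w := by
  simp [zbar]

lemma xm1_append_pair (v : List ℕ+) (c a : ℕ+) :
    xm1 (v ++ [c, a]) = xm1 (v ++ [c]) * (xx c a - 1) := by
  induction v with
  | nil =>
    simp only [List.nil_append]
    rw [xm1_cons_cons, xm1_singleton, xm1_singleton]
    ring
  | cons d v' ih =>
    cases v' with
    | nil =>
      simp only [List.nil_append, List.cons_append]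
      rw [xm1_cons_cons, xm1_cons_cons, xm1_singleton, xm1_cons_cons, xm1_singleton]
      ring
    | cons e v'' =>
      simp only [List.cons_append] at ih ⊢
      rw [xm1_cons_cons, xm1_cons_cons, ih]
      ring

lemma asc_eq_xm1_reverse (l : List ℕ+) :
    ((l.zip l.tail).map fun p => xx p.2 p.1 - 1).prod = xm1 l.reverse := by
  induction l with
  | nil => rfl
  | cons a t ih =>
    cases t with
    | nil => rfl
    | cons b t' =>
      have h1 : ((a :: b :: t').zip (a :: b :: t').tail).map (fun p => xx p.2 p.1 - 1)
          = (xx b a - 1) :: ((b :: t').zip (b :: t').tail).map (fun p => xx p.2 p.1 - 1) := by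
        simp
      rw [h1, List.prod_cons, ih]
      have h2 : (a :: b :: t').reverse = ((b :: t').reverse.dropLast) ++ [b, a] := by
        have : (b :: t').reverse = t'.reverse ++ [b] := by simp
        simp [this]
      have h3 : (b :: t').reverse = ((b :: t').reverse.dropLast) ++ [b] := by
        have : (b :: t').reverse = t'.reverse ++ [b] := by simp
        simp [this]
      rw [h2, xm1_append_pair, ← h3]
      ring

lemma zbar_dsc (S : Finset ℕ+) : zbar (dsc S) = ∏ a ∈ S, zz a := by
  rw [zbar, dsc, List.map_reverse, List.prod_reverse, Finset.prod_eq_multiset_prod,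
    ← Finset.sort_eq S (· ≤ ·), Multiset.map_coe, Multiset.prod_coe]

lemma DXZ_eq (S : Finset ℕ+) : DXZ S = zbar (dsc S) * xm1 (dsc S) := by
  rw [DXZ, zbar_dsc, asc_eq_xm1_reverse]
  rfl

lemma length_dsc (S : Finset ℕ+) : (dsc S).length = S.card := by
  simp [dsc, Finset.length_sort]

lemma pairTerm_eq (w : List ℕ+) (S : {S : Finset ℕ+ // S.Nonempty}) :
    FF w * GG S = tt ^ (phi (w, S)).length * zbar (phi (w, S)) *
      (descFactor w * xm1 (dsc S.1)) := by
  rw [FF, GG, DXZ_eq, phi]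
  simp only [List.length_append, zbar_append, pow_add, length_dsc]
  ring

/-! ### The telescoping identity -/

lemma main_sum : ∀ u : List ℕ+, u ≠ [] →
    (∑ j ∈ Finset.range u.length,
      if List.Chain' (· > ·) (u.drop j) then descFactor (u.take j) * xm1 (u.drop j) else 0)
    = descFactor u := by
  intro u
  induction u with
  | nil => intro h; exact absurd rfl h
  | cons a u' IH =>
    intro _
    cases u' with
    | nil =>
      simp [descFactor_singleton, descFactor_nil, xm1_singleton, List.Chain']
    | cons b t =>
      have hIH := IH (by simp)
      have hlen : (a :: b :: t).length = (b :: t).length + 1 := rfl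
      rw [hlen, Finset.sum_range_succ']
      simp only [List.drop_succ_cons, List.take_succ_cons, List.drop_zero, List.take_zero]
      have hlen2 : (b :: t).length = t.length + 1 := rfl
      rw [hlen2, Finset.sum_range_succ']
      simp only [List.drop_succ_cons, List.take_succ_cons, List.drop_zero, List.take_zero]
      have hsum : (∑ j ∈ Finset.range t.length,
          if List.Chain' (· > ·) (t.drop j)
          then descFactor (a :: b :: t.take j) * xm1 (t.drop j) else 0)
          = (if b < a then xx a b else 1) * ∑ j ∈ Finset.range t.length,
          (if List.Chain' (· > ·) (t.drop j)
          then descFactor (b :: t.take j) * xm1 (t.drop j) else 0) := by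
        rw [Finset.mul_sum]
        refine Finset.sum_congr rfl fun j _ => ?_
        by_cases h : List.Chain' (· > ·) (t.drop j)
        · rw [if_pos h, if_pos h, descFactor_cons_cons]; ring
        · rw [if_neg h, if_neg h, mul_zero]
      rw [hsum]
      rw [hlen2, Finset.sum_range_succ'] at hIH
      simp only [List.drop_succ_cons, List.take_succ_cons, List.drop_zero,
        List.take_zero] at hIH
      rw [descFactor_cons_cons, ← hIH]
      have hchain : List.Chain' (· > ·) (a :: b :: t)
          ↔ (a > b ∧ List.Chain' (· > ·) (b :: t)) := List.isChain_cons_cons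
      by_cases hab : b < a
      · by_cases hch : List.Chain' (· > ·) (b :: t)
        · rw [if_pos (hchain.mpr ⟨hab, hch⟩), if_pos hch, if_pos hch, if_pos hab,
            xm1_cons_cons, descFactor_singleton, descFactor_nil]
          ring
        · rw [if_neg (fun h => hch (hchain.mp h).2), if_neg hch, if_neg hch, if_pos hab]
          ring
      · rw [if_neg (fun h => hab (hchain.mp h).1), if_neg hab]
        by_cases hch : List.Chain' (· > ·) (b :: t)
        · rw [if_pos hch, if_pos hch, descFactor_singleton, descFactor_nil]
          ring
        · rw [if_neg hch, if_neg hch]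
          ring

/-! ### The fibers of `phi` -/

def validF (u : List ℕ+) : Finset ℕ :=
  (Finset.range u.length).filter fun j => List.Chain' (· > ·) (u.drop j)

lemma sum_validF (u : List ℕ+) (hu : u ≠ []) :
    ∑ j ∈ validF u, descFactor (u.take j) * xm1 (u.drop j) = descFactor u := by
  rw [validF, Finset.sum_filter]
  exact main_sum u hu

lemma dsc_of_chain (v : List ℕ+) (hv : List.Chain' (· > ·) v) : dsc v.toFinset = v := by
  have hpw : v.Pairwise (· > ·) := List.isChain_iff_pairwise.mp hv
  have hnd : v.Nodup := hpw.imp (fun h => ne_of_gt h)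
  have hrev : v.reverse.Pairwise (· ≤ ·) := by
    rw [List.pairwise_reverse]
    exact hpw.imp (fun h => le_of_lt h)
  have : v.reverse.toFinset.sort (· ≤ ·) = v.reverse :=
    (List.toFinset_sort (· ≤ ·) (by simpa using hnd)).mpr hrev
  rw [dsc, ← List.toFinset_reverse, this, List.reverse_reverse]

lemma chain_dsc (S : Finset ℕ+) : List.Chain' (· > ·) (dsc S) := by
  rw [dsc]
  show List.IsChain _ _
  rw [List.isChain_reverse]
  have h := List.sortedLT_iff_pairwise.mp (Finset.sortedLT_sort S)
  exact List.Pairwise.isChain (List.Pairwise.imp (fun hab => hab) h)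

lemma dsc_ne_nil (S : {S : Finset ℕ+ // S.Nonempty}) : dsc S.1 ≠ [] := by
  have h1 : (dsc S.1).length = S.1.card := length_dsc S.1
  have hc : 0 < S.1.card := Finset.card_pos.mpr S.2
  intro h
  rw [h] at h1
  simp at h1
  omega

lemma mem_validF {u : List ℕ+} {j : ℕ} :
    j ∈ validF u ↔ j < u.length ∧ List.Chain' (· > ·) (u.drop j) := by
  simp [validF]

lemma fibAux1 (u : List ℕ+) (j : {j // j ∈ validF u}) : (u.drop j.1).toFinset.Nonempty := by
  have hj := mem_validF.mp j.2
  have hne : u.drop j.1 ≠ [] := by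
    intro h
    have := List.drop_eq_nil_iff.mp h
    omega
  rcases List.exists_mem_of_ne_nil _ hne with ⟨x, hx⟩
  exact ⟨x, List.mem_toFinset.mpr hx⟩

lemma fibAux2 (u : List ℕ+) (j : {j // j ∈ validF u}) :
    phi (u.take j.1, ⟨(u.drop j.1).toFinset, fibAux1 u j⟩) = u := by
  have hj := mem_validF.mp j.2
  show u.take j.1 ++ dsc (u.drop j.1).toFinset = u
  rw [dsc_of_chain _ hj.2, List.take_append_drop]

lemma valid_of (u : List ℕ+) (p : List ℕ+ × {S : Finset ℕ+ // S.Nonempty})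
    (h : phi p = u) : p.1.length ∈ validF u := by
  rw [phi] at h
  rw [mem_validF]
  constructor
  · have h1 := congrArg List.length h
    rw [List.length_append] at h1
    have h2 : (dsc p.2.1).length ≠ 0 := by
      intro hh
      exact dsc_ne_nil p.2 (List.length_eq_zero_iff.mp hh)
    omega
  · have hd : u.drop p.1.length = dsc p.2.1 := by rw [← h, List.drop_left]
    rw [hd]
    exact chain_dsc p.2.1

/-- The fibers of `phi` are parametrized by valid split points. -/
def fibEquiv (u : List ℕ+) :
    {j // j ∈ validF u} ≃ {p : List ℕ+ × {S : Finset ℕ+ // S.Nonempty} // phi p = u} where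
  toFun j := ⟨(u.take j.1, ⟨(u.drop j.1).toFinset, fibAux1 u j⟩), fibAux2 u j⟩
  invFun p := ⟨p.1.1.length, valid_of u p.1 p.2⟩
  left_inv j := by
    apply Subtype.ext
    have hj := mem_validF.mp j.2
    show (u.take j.1).length = j.1
    rw [List.length_take]
    omega
  right_inv p := by
    obtain ⟨⟨w, S⟩, hp⟩ := p
    have hphi : w ++ dsc S.1 = u := hp
    apply Subtype.ext
    have htake : u.take w.length = w := by rw [← hphi, List.take_left]
    have hdrop : u.drop w.length = dsc S.1 := by rw [← hphi, List.drop_left]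
    have hS : (u.drop w.length).toFinset = S.1 := by
      rw [hdrop, dsc, List.toFinset_reverse, Finset.sort_toFinset]
    refine Prod.ext (by simpa using htake) ?_
    apply Subtype.ext
    simpa using hS

lemma FF_nil : FF [] = 1 := by
  simp [FF, zbar_nil, descFactor_nil]

lemma hasSum_fiber (u : List ℕ+) :
    HasSum (fun c : {p : List ℕ+ × {S : Finset ℕ+ // S.Nonempty} // phi p = u}
      => FF c.1.1 * GG c.1.2) (FF u - if u = [] then 1 else 0) := by
  by_cases hu : u = []
  · subst hu
    have : IsEmpty {p : List ℕ+ × {S : Finset ℕ+ // S.Nonempty} // phi p = []} := by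
      constructor
      rintro ⟨p, hp⟩
      rw [phi] at hp
      exact dsc_ne_nil p.2 (List.append_eq_nil_iff.mp hp).2
    rw [if_pos rfl, FF_nil, sub_self]
    exact hasSum_empty
  · rw [if_neg hu, sub_zero]
    have key : HasSum (fun j : {j // j ∈ validF u} =>
        tt ^ u.length * zbar u * (descFactor (u.take j.1) * xm1 (u.drop j.1))) (FF u) := by
      have h1 := hasSum_fintype (fun j : {j // j ∈ validF u} =>
        tt ^ u.length * zbar u * (descFactor (u.take j.1) * xm1 (u.drop j.1)))
      have h2 : (∑ j : {j // j ∈ validF u},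
          tt ^ u.length * zbar u * (descFactor (u.take j.1) * xm1 (u.drop j.1))) = FF u := by
        rw [Finset.sum_coe_sort (validF u)
          (fun j => tt ^ u.length * zbar u * (descFactor (u.take j) * xm1 (u.drop j))),
          ← Finset.mul_sum, sum_validF u hu, FF]
      rwa [h2] at h1
    refine (Equiv.hasSum_iff (fibEquiv u)).mp ?_
    have hcong : ((fun c : {p : List ℕ+ × {S : Finset ℕ+ // S.Nonempty} // phi p = u}
        => FF c.1.1 * GG c.1.2) ∘ (fibEquiv u))
        = fun j : {j // j ∈ validF u} =>
          tt ^ u.length * zbar u * (descFactor (u.take j.1) * xm1 (u.drop j.1)) := by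
      funext j
      have hj := mem_validF.mp j.2
      show FF (u.take j.1) * GG ⟨(u.drop j.1).toFinset, fibAux1 u j⟩ = _
      rw [pairTerm_eq]
      have h3 : phi (u.take j.1, ⟨(u.drop j.1).toFinset, fibAux1 u j⟩) = u := fibAux2 u j
      rw [h3]
      show tt ^ u.length * zbar u * (descFactor (u.take j.1)
        * xm1 (dsc (u.drop j.1).toFinset)) = _
      rw [dsc_of_chain _ hj.2]
    rw [hcong]
    exact key

/-! ### Summability -/

lemma summable_of_fin {ι : Type*} (f : ι → PS)
    (h : ∀ m : Var →₀ ℕ, {i | MvPowerSeries.coeff m (f i) ≠ 0}.Finite) : Summable f := by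
  apply Pi.summable.2
  intro m
  apply summable_of_ne_finset_zero (s := (h m).toFinset)
  intro i hi
  by_contra hne
  exact hi ((h m).mem_toFinset.mpr hne)

open MvPowerSeries in
lemma coeff_mul_ne_zero {f g : PS} {m : Var →₀ ℕ} (h : coeff m (f * g) ≠ 0) :
    ∃ p ∈ Finset.HasAntidiagonal.antidiagonal m, coeff p.1 f ≠ 0 ∧ coeff p.2 g ≠ 0 := by
  rw [MvPowerSeries.coeff_mul] at h
  rcases Finset.exists_ne_zero_of_sum_ne_zero h with ⟨p, hp, hne⟩
  exact ⟨p, hp, left_ne_zero_of_mul hne, right_ne_zero_of_mul hne⟩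

open MvPowerSeries in
lemma coeff_X_mul_ne_zero {v : Var} {r : PS} {m : Var →₀ ℕ}
    (h : coeff m (MvPowerSeries.X v * r) ≠ 0) :
    ∃ m', m = Finsupp.single v 1 + m' ∧ coeff m' r ≠ 0 := by
  rcases coeff_mul_ne_zero h with ⟨p, hp, h1, h2⟩
  rw [MvPowerSeries.coeff_X] at h1
  by_cases he : p.1 = Finsupp.single v 1
  · exact ⟨p.2, by rw [← Finset.HasAntidiagonal.mem_antidiagonal.mp hp, he], h2⟩
  · rw [if_neg he] at h1; exact absurd rfl h1

open MvPowerSeries in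
lemma ne_zero_of_X_mul {v : Var} {m : Var →₀ ℕ} {f : PS} (hf : ∃ r, f = MvPowerSeries.X v * r)
    (h : coeff m f ≠ 0) : m v ≠ 0 := by
  rcases hf with ⟨r, rfl⟩
  rcases coeff_X_mul_ne_zero h with ⟨m', hm, _⟩
  rw [hm]
  simp [Finsupp.add_apply, Finsupp.single_eq_same]

open MvPowerSeries in
lemma coeff_X_pow_mul_ne_zero {v : Var} : ∀ (n : ℕ) (r : PS) (m : Var →₀ ℕ),
    coeff m (MvPowerSeries.X v ^ n * r) ≠ 0 → n ≤ m v := by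
  intro n
  induction n with
  | zero => intro r m _; exact Nat.zero_le _
  | succ n ih =>
    intro r m h
    have heq : MvPowerSeries.X (R := ℚ) v ^ (n + 1) * r
        = MvPowerSeries.X v * (MvPowerSeries.X v ^ n * r) := by ring
    rw [heq] at h
    rcases coeff_X_mul_ne_zero h with ⟨m', hm, h2⟩
    have := ih r m' h2
    rw [hm]
    simp only [Finsupp.add_apply, Finsupp.single_eq_same]
    omega

lemma FF_letter {w : List ℕ+} {a : ℕ+} (ha : a ∈ w) :
    ∃ r : PS, FF w = MvPowerSeries.X (Var.z a) * r := by
  rcases List.append_of_mem ha with ⟨s, t2, rfl⟩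
  refine ⟨tt ^ (s ++ a :: t2).length * (zbar s * zbar t2) * descFactor (s ++ a :: t2), ?_⟩
  rw [FF, zbar_append, zbar_cons, zz]
  ring

lemma FF_pow : ∀ w : List ℕ+, FF w = MvPowerSeries.X Var.t ^ w.length *
    (zbar w * descFactor w) := by
  intro w; rw [FF, tt]; ring

lemma GG_letter {S : {S : Finset ℕ+ // S.Nonempty}} {a : ℕ+} (ha : a ∈ S.1) :
    ∃ r : PS, GG S = MvPowerSeries.X (Var.z a) * r := by
  have h := Finset.mul_prod_erase S.1 zz ha
  refine ⟨tt ^ S.1.card * ((∏ x ∈ S.1.erase a, zz x) *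
    (((S.1.sort (· ≤ ·)).zip (S.1.sort (· ≤ ·)).tail).map fun p => xx p.2 p.1 - 1).prod), ?_⟩
  rw [GG, DXZ, ← h, zz]
  ring

lemma finite_letters (m : Var →₀ ℕ) : {a : ℕ+ | m (Var.z a) ≠ 0}.Finite := by
  have hsub : {a : ℕ+ | m (Var.z a) ≠ 0} ⊆ (fun a => Var.z a) ⁻¹' ↑m.support := by
    intro a ha
    simp only [Set.mem_preimage, Finset.mem_coe, Finsupp.mem_support_iff]
    exact ha
  have hinj : Set.InjOn (fun a => Var.z a) ((fun a => Var.z a) ⁻¹' ↑m.support) := by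
    intro a _ b _ h
    injection h
  exact (m.support.finite_toSet.preimage hinj).subset hsub

lemma finite_lists (A : Set ℕ+) (hA : A.Finite) (n : ℕ) :
    {w : List ℕ+ | w.length ≤ n ∧ ∀ a ∈ w, a ∈ A}.Finite := by
  haveI := hA.to_subtype
  have h1 : {l : List A | l.length ≤ n}.Finite := List.finite_length_le ↥A n
  have h2 := h1.image (List.map (Subtype.val))
  apply h2.subset
  rintro w ⟨hlen, hmem⟩
  refine ⟨w.attachWith (· ∈ A) hmem, ?_, List.attachWith_map_subtype_val hmem⟩
  simp only [Set.mem_setOf_eq, List.length_attachWith]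
  exact hlen

lemma finite_finsets (m : Var →₀ ℕ) :
    {S : Finset ℕ+ | ∀ a ∈ S, m (Var.z a) ≠ 0}.Finite := by
  have h1 := (finite_letters m).finite_subsets
  have h2 := h1.preimage (f := fun S : Finset ℕ+ => (↑S : Set ℕ+))
    (Finset.coe_injective.injOn)
  apply h2.subset
  intro S hS a ha
  exact hS a (Finset.mem_coe.mp ha)

lemma summable_FF : Summable FF := by
  apply summable_of_fin
  intro m
  apply (finite_lists {a : ℕ+ | m (Var.z a) ≠ 0} (finite_letters m) (m Var.t)).subset
  intro w hw
  constructor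
  · have := coeff_X_pow_mul_ne_zero w.length (zbar w * descFactor w) m (by
      rw [← FF_pow]; exact hw)
    exact this
  · intro a ha
    exact ne_zero_of_X_mul (FF_letter ha) hw

lemma summable_GG : Summable GG := by
  apply summable_of_fin
  intro m
  have h2 := (finite_finsets m).preimage
    (f := fun S : {S : Finset ℕ+ // S.Nonempty} => S.1) (Subtype.val_injective.injOn)
  apply h2.subset
  intro S hS a ha
  exact ne_zero_of_X_mul (GG_letter ha) hS

lemma summable_pair : Summable (fun p : List ℕ+ × {S : Finset ℕ+ // S.Nonempty} =>
    FF p.1 * GG p.2) := by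
  apply summable_of_fin
  intro m
  have hfin : ({w : List ℕ+ | w.length ≤ m Var.t ∧ ∀ a ∈ w, a ∈ {a : ℕ+ | m (Var.z a) ≠ 0}} ×ˢ
      ((Subtype.val ⁻¹' {S : Finset ℕ+ | ∀ a ∈ S, m (Var.z a) ≠ 0}) :
        Set {S : Finset ℕ+ // S.Nonempty})).Finite := by
    refine Set.Finite.prod (finite_lists _ (finite_letters m) _) ?_
    exact (finite_finsets m).preimage (Subtype.val_injective.injOn)
  apply hfin.subset
  rintro ⟨w, S⟩ hws
  simp only [Set.mem_setOf_eq, ne_eq] at hws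
  rcases coeff_mul_ne_zero hws with ⟨p, hp, h1, h2⟩
  have hadd : p.1 + p.2 = m := Finset.HasAntidiagonal.mem_antidiagonal.mp hp
  have hle : ∀ v, p.1 v ≤ m v := by
    intro v; rw [← hadd]; simp [Finsupp.add_apply]
  constructor
  · constructor
    · have := coeff_X_pow_mul_ne_zero w.length (zbar w * descFactor w) p.1 (by
        rw [← FF_pow]; exact h1)
      exact le_trans this (hle Var.t)
    · intro a ha
      have := ne_zero_of_X_mul (FF_letter ha) h1
      have h3 := hle (Var.z a)
      simp only [Set.mem_setOf_eq]
      omega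
  · intro a ha
    have := ne_zero_of_X_mul (GG_letter ha) h2
    have h3 : p.2 (Var.z a) ≤ m (Var.z a) := by rw [← hadd]; simp [Finsupp.add_apply]
    omega

/-- Theorem 1 (labeled descents):
`D ⋅ (1 - Σ_{n≥1} t^n Σ_{S ⊆ ℙ, |S| = n} DXZ(S)) = 1`, where
`D = Σ_{w ∈ ℙ^*} t^{|w|} z̄^w ∏_{i<j} x_{ji}^{ji(w)}`. -/
theorem labeled_descents :
    (∑' w : List ℕ+, tt ^ w.length * zbar w * descFactor w) *
      (1 - ∑' S : {S : Finset ℕ+ // S.Nonempty}, tt ^ S.1.card * DXZ S.1) = 1 := by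
  classical
  have hF : Summable FF := summable_FF
  have hG : Summable GG := summable_GG
  have hFG := summable_pair
  have hFs := hF.hasSum
  have hGs := hG.hasSum
  have hFGs := hFG.hasSum
  have hsig : HasSum (fun q : (Σ u : List ℕ+,
      {p : List ℕ+ × {S : Finset ℕ+ // S.Nonempty} // phi p = u}) => FF q.2.1.1 * GG q.2.1.2)
      (∑' p : List ℕ+ × {S : Finset ℕ+ // S.Nonempty}, FF p.1 * GG p.2) :=
    (Equiv.hasSum_iff (Equiv.sigmaFiberEquiv phi)).mpr hFGs
  have htot : HasSum (fun u : List ℕ+ => FF u - if u = [] then 1 else 0)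
      (∑' p : List ℕ+ × {S : Finset ℕ+ // S.Nonempty}, FF p.1 * GG p.2) :=
    HasSum.sigma hsig (fun u => hasSum_fiber u)
  have hone : HasSum (fun u : List ℕ+ => if u = [] then (1 : PS) else 0) 1 :=
    hasSum_ite_eq [] 1
  have htot2 : HasSum (fun u : List ℕ+ => FF u - if u = [] then 1 else 0)
      ((∑' w, FF w) - 1) := hFs.sub hone
  have hC : (∑' p : List ℕ+ × {S : Finset ℕ+ // S.Nonempty}, FF p.1 * GG p.2)
      = (∑' w, FF w) - 1 := htot.unique htot2
  have hmul : (∑' w, FF w) * (∑' S, GG S)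
      = ∑' p : List ℕ+ × {S : Finset ℕ+ // S.Nonempty}, FF p.1 * GG p.2 :=
    hFs.mul_eq hGs hFGs
  show (∑' w, FF w) * (1 - ∑' S, GG S) = 1
  rw [mul_sub, mul_one, hmul, hC]
  ring
end
end

section
/- Work in the formal power series ring over ℚ in the variables t, z_a (a ∈ ℙ) and x_{ab} (a,b ∈ ℙ). Let WD = Σ_{w∈ℙ^*} t^{|w|} z̄^w ∏_{i≤j} x_{ji}^{ji(w)}, where ji(w) is the number of positions s with w_s = j and w_{s+1} = i (so each weak descent of w contributes the factor x indexed by its weak-descent pair). For a nonempty weakly decreasing word v = j_1 ≥ j_2 ≥ ⋯ ≥ j_k put WDXZ(v) = z_{j_1} if k = 1, and WDXZ(v) = z_{j_1}⋯z_{j_k} ∏_{i=1}^{k−1}(x_{j_i j_{i+1}} − 1) if k ≥ 2. Then WD = 1/(1 − Σ_{n≥1} t^n Σ_{v weakly decreasing, |v|=n} WDXZ(v)), i.e. WD · (1 − Σ_{n≥1} t^n Σ_{v weakly decreasing, |v|=n} WDXZ(v)) = 1. -/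
noncomputable section

/-- `∏_{i≤j} x_{ji}^{ji(w)}`: one factor `x_{w_s w_{s+1}}` for every weak-descent position `s`. -/
def wdescFactor (w : List ℕ+) : PS :=
  ((w.zip w.tail).map fun p => if p.2 ≤ p.1 then xx p.1 p.2 else 1).prod

/-- `WDXZ(v)` for a nonempty weakly decreasing word `v = j_1 ≥ ⋯ ≥ j_k`:
`z_{j_1} ⋯ z_{j_k} ∏_{i=1}^{k-1} (x_{j_i j_{i+1}} - 1)` (so just `z_{j_1}` when `k = 1`). -/
def WDXZ (v : List ℕ+) : PS :=
  zbar v * ((v.zip v.tail).map fun p => xx p.1 p.2 - 1).prod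

namespace LWD

/- topology instances -/
instance : T2Space PS := inferInstanceAs (T2Space ((Var →₀ ℕ) → ℚ))
instance : T3Space PS := inferInstanceAs (T3Space ((Var →₀ ℕ) → ℚ))
instance : RegularSpace PS := inferInstanceAs (RegularSpace ((Var →₀ ℕ) → ℚ))
instance : ContinuousAdd PS := inferInstanceAs (ContinuousAdd ((Var →₀ ℕ) → ℚ))
instance : IsTopologicalAddGroup PS := inferInstanceAs (IsTopologicalAddGroup ((Var →₀ ℕ) → ℚ))

instance : ContinuousMul PS := by
  constructor
  have : (fun p : PS × PS => p.1 * p.2)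
      = fun p : PS × PS => (fun d => ∑ q ∈ Finset.HasAntidiagonal.antidiagonal d, p.1 q.1 * p.2 q.2 : PS) := by
    funext p
    funext d
    exact MvPowerSeries.coeff_mul (n := d) (φ := p.1) (ψ := p.2)
  rw [this]
  apply continuous_pi
  intro d
  exact continuous_finset_sum _ fun q _ =>
    (((continuous_apply q.1).comp continuous_fst).mul ((continuous_apply q.2).comp continuous_snd))

instance : IsTopologicalSemiring PS := ⟨⟩

/- summability from coefficientwise finite support -/
lemma summable_of_coefFin {β : Type} (f : β → PS)
    (h : ∀ d, (Function.support fun b => MvPowerSeries.coeff d (f b)).Finite) :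
    Summable f := by
  refine ⟨(fun d => ∑ b ∈ (h d).toFinset, MvPowerSeries.coeff d (f b) : PS), ?_⟩
  apply Pi.hasSum.mpr
  intro d
  exact hasSum_sum_of_ne_finset_zero fun b hb => by
    by_contra hne
    exact hb ((h d).mem_toFinset.mpr hne)



/-- `a w`: the word weight. -/
def aw (w : List ℕ+) : PS := tt ^ w.length * zbar w * wdescFactor w

/-- `s v`. -/
def sv (v : List ℕ+) : PS := tt ^ v.length * WDXZ v

/-- exponents of the `z`-variables of a word -/
def zexp : List ℕ+ → (Var →₀ ℕ)
  | [] => 0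
  | c :: l => Finsupp.single (Var.z c) 1 + zexp l

lemma zexp_t (l : List ℕ+) : zexp l Var.t = 0 := by
  induction l with
  | nil => rfl
  | cons c l ih =>
    simp [zexp, Finsupp.single_apply, ih]

lemma zexp_z_ne {l : List ℕ+} {c : ℕ+} (h : c ∈ l) : zexp l (Var.z c) ≠ 0 := by
  induction l with
  | nil => simp at h
  | cons c' l ih =>
    rcases List.mem_cons.mp h with h | h
    · subst h
      simp [zexp, Finsupp.single_apply]
    · simp only [zexp, Finsupp.add_apply]
      exact fun hh => (ih h) (by omega)

lemma zbar_eq (l : List ℕ+) : zbar l = MvPowerSeries.monomial (zexp l) 1 := by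
  induction l with
  | nil => rfl
  | cons c l ih =>
    show zz c * zbar l = _
    rw [ih, zz, MvPowerSeries.X_def, MvPowerSeries.monomial_mul_monomial, one_mul]
    rfl

def pexp (n : ℕ) (l : List ℕ+) : Var →₀ ℕ := Finsupp.single Var.t n + zexp l

lemma pm_eq (n : ℕ) (l : List ℕ+) :
    tt ^ n * zbar l = MvPowerSeries.monomial (pexp n l) 1 := by
  rw [zbar_eq, tt, MvPowerSeries.X_pow_eq, MvPowerSeries.monomial_mul_monomial, one_mul, pexp]

lemma le_of_coeff_monomial_mul_ne {e d : Var →₀ ℕ} {r : PS}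
    (h : MvPowerSeries.coeff d (MvPowerSeries.monomial e 1 * r) ≠ 0) : e ≤ d := by
  rw [MvPowerSeries.coeff_mul] at h
  obtain ⟨p, hp, hne⟩ := Finset.exists_ne_zero_of_sum_ne_zero h
  rw [MvPowerSeries.coeff_monomial] at hne
  by_cases hpe : p.1 = e
  · rw [Finset.HasAntidiagonal.mem_antidiagonal] at hp
    rw [← hp, ← hpe]
    exact le_add_of_nonneg_right (by positivity)
  · simp [hpe] at hne

/-- boundedness of a word relative to a monomial -/
def Bnd (d : Var →₀ ℕ) (l : List ℕ+) : Prop :=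
  l.length ≤ d Var.t ∧ ∀ c ∈ l, d (Var.z c) ≠ 0

lemma bnd_mono {d1 d : Var →₀ ℕ} (h : d1 ≤ d) {l : List ℕ+} (hb : Bnd d1 l) : Bnd d l := by
  rw [Finsupp.le_def] at h
  exact ⟨hb.1.trans (h Var.t), fun c hc => fun h0 => hb.2 c hc (Nat.le_zero.mp (h0 ▸ h (Var.z c)))⟩

lemma bnd_of_ne {d : Var →₀ ℕ} {n : ℕ} {l : List ℕ+} {r : PS}
    (h : MvPowerSeries.coeff d (tt ^ n * zbar l * r) ≠ 0) :
    n ≤ d Var.t ∧ ∀ c ∈ l, d (Var.z c) ≠ 0 := by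
  rw [pm_eq] at h
  have hle := le_of_coeff_monomial_mul_ne h
  rw [Finsupp.le_def] at hle
  constructor
  · have := hle Var.t
    simp [pexp, Finsupp.single_apply, zexp_t] at this
    exact this
  · intro c hc
    have := hle (Var.z c)
    have h2 : pexp n l (Var.z c) ≠ 0 := by
      simp only [pexp, Finsupp.add_apply]
      have := zexp_z_ne hc
      omega
    omega

lemma bnd_aw {d : Var →₀ ℕ} {w : List ℕ+} (h : MvPowerSeries.coeff d (aw w) ≠ 0) :
    Bnd d w :=
  bnd_of_ne (by simpa [aw] using h)

lemma bnd_sv {d : Var →₀ ℕ} {v : List ℕ+} (h : MvPowerSeries.coeff d (sv v) ≠ 0) :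
    Bnd d v := by
  apply bnd_of_ne (r := ((v.zip v.tail).map fun p => xx p.1 p.2 - 1).prod)
  rw [mul_assoc]
  simpa [sv, WDXZ, mul_assoc] using h

lemma finite_lists {S : Set ℕ+} (hS : S.Finite) (N : ℕ) :
    {l : List ℕ+ | l.length ≤ N ∧ ∀ c ∈ l, c ∈ S}.Finite := by
  induction N with
  | zero =>
    apply Set.Finite.subset (Set.finite_singleton ([] : List ℕ+))
    rintro l ⟨hl, -⟩
    simp [List.length_eq_zero_iff.mp (Nat.le_zero.mp hl)]
  | succ n ih =>
    apply Set.Finite.subset ((Set.finite_singleton ([] : List ℕ+)).union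
      ((hS.prod ih).image fun p => p.1 :: p.2))
    rintro l ⟨hl, hmem⟩
    cases l with
    | nil => exact Or.inl rfl
    | cons c l' =>
      refine Or.inr ⟨(c, l'), ⟨hmem c (by simp), ?_, fun c' hc' => hmem c' (by simp [hc'])⟩, rfl⟩
      simpa using hl

lemma finite_bnd (d : Var →₀ ℕ) : {l : List ℕ+ | Bnd d l}.Finite := by
  have hS : {c : ℕ+ | d (Var.z c) ≠ 0}.Finite := by
    have : {c : ℕ+ | d (Var.z c) ≠ 0} = Var.z ⁻¹' (d.support : Set Var) := by
      ext c; simp [Finsupp.mem_support_iff]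
    rw [this]
    exact Set.Finite.preimage (fun a _ b _ h => by injection h) (d.support.finite_toSet)
  exact Set.Finite.subset (finite_lists hS (d Var.t)) fun l hl => ⟨hl.1, hl.2⟩



lemma aw_nil : aw [] = 1 := by simp [aw, zbar, wdescFactor]

lemma aw_single (c : ℕ+) : aw [c] = tt * zz c := by
  simp [aw, zbar, wdescFactor]

lemma sv_single (c : ℕ+) : sv [c] = tt * zz c := by
  simp [sv, WDXZ, zbar]

lemma aw_cons (c c' : ℕ+) (l : List ℕ+) :
    aw (c :: c' :: l) = tt * zz c * (if c' ≤ c then xx c c' else 1) * aw (c' :: l) := by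
  simp only [aw, zbar, wdescFactor, List.length_cons, pow_succ, List.map_cons, List.prod_cons,
    List.tail_cons, List.zip_cons_cons]
  ring

lemma sv_cons (c c' : ℕ+) (l : List ℕ+) :
    sv (c :: c' :: l) = tt * zz c * (xx c c' - 1) * sv (c' :: l) := by
  simp only [sv, WDXZ, zbar, List.length_cons, pow_succ, List.map_cons, List.prod_cons,
    List.tail_cons, List.zip_cons_cons]
  ring

open Classical in
/-- the valid cut positions of a word -/
def M (u : List ℕ+) : Finset ℕ :=
  (Finset.Icc 1 u.length).filter fun m => List.Chain' (fun a b => b ≤ a) (u.take m)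

lemma mem_M {u : List ℕ+} {m : ℕ} :
    m ∈ M u ↔ 1 ≤ m ∧ m ≤ u.length ∧ List.Chain' (fun a b => b ≤ a) (u.take m) := by
  simp [M, Finset.mem_filter, Finset.mem_Icc, and_assoc]

lemma M_single (c : ℕ+) : M [c] = {1} := by
  ext m
  simp only [mem_M, Finset.mem_singleton, List.length_cons, List.length_nil]
  constructor
  · rintro ⟨h1, h2, -⟩; omega
  · rintro rfl
    exact ⟨le_refl _, le_refl _, by simp [List.Chain']⟩

lemma M_cons_le {c c' : ℕ+} (l : List ℕ+) (h : c' ≤ c) :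
    M (c :: c' :: l) = insert 1 ((M (c' :: l)).image (· + 1)) := by
  ext m
  simp only [mem_M, Finset.mem_insert, Finset.mem_image]
  constructor
  · rintro ⟨h1, h2, h3⟩
    rcases m with _ | _ | k
    · omega
    · exact Or.inl rfl
    · refine Or.inr ⟨k + 1, ⟨by omega, by simp only [List.length_cons] at h2 ⊢; omega, ?_⟩, rfl⟩
      rw [List.take_succ_cons] at h3 ⊢
      rw [List.take_succ_cons, List.Chain', List.isChain_cons_cons] at h3
      exact h3.2
  · rintro (rfl | ⟨k, hk, rfl⟩)
    · exact ⟨le_refl _, by simp, by simp [List.Chain']⟩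
    · obtain ⟨hk1, hk2, hk3⟩ := hk
      refine ⟨by omega, by simp only [List.length_cons] at hk2 ⊢; omega, ?_⟩
      obtain ⟨j, rfl⟩ : ∃ j, k = j + 1 := ⟨k - 1, by omega⟩
      rw [List.take_succ_cons, List.take_succ_cons, List.Chain', List.isChain_cons_cons]
      rw [List.take_succ_cons] at hk3
      exact ⟨h, hk3⟩

lemma M_cons_lt {c c' : ℕ+} (l : List ℕ+) (h : ¬ c' ≤ c) :
    M (c :: c' :: l) = {1} := by
  ext m
  simp only [mem_M, Finset.mem_singleton]
  constructor
  · rintro ⟨h1, h2, h3⟩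
    by_contra hm
    obtain ⟨k, rfl⟩ : ∃ k, m = k + 2 := ⟨m - 2, by omega⟩
    rw [List.take_succ_cons, List.take_succ_cons, List.Chain', List.isChain_cons_cons] at h3
    exact h (h3.1)
  · rintro rfl
    exact ⟨le_refl _, by simp, by simp [List.Chain']⟩

/-- The core telescoping identity. -/
lemma core : ∀ (u : List ℕ+), u ≠ [] →
    ∑ m ∈ M u, sv (u.take m) * aw (u.drop m) = aw u := by
  intro u
  induction u with
  | nil => intro h; exact absurd rfl h
  | cons c v ih =>
    intro _
    cases v with
    | nil =>
      rw [M_single, Finset.sum_singleton]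
      simp only [List.take_succ_cons, List.take_nil, List.take_zero, List.drop_succ_cons, List.drop_nil, List.drop_zero]
      rw [sv_single, aw_nil, aw_single, mul_one]
    | cons c' l =>
      by_cases hcc : c' ≤ c
      · rw [M_cons_le l hcc, Finset.sum_insert, Finset.sum_image]
        · have key : ∀ m ∈ M (c' :: l),
              sv ((c :: c' :: l).take (m + 1)) * aw ((c :: c' :: l).drop (m + 1)) =
              (tt * zz c * (xx c c' - 1)) * (sv ((c' :: l).take m) * aw ((c' :: l).drop m)) := by
            intro m hm
            have h1 := (mem_M.mp hm).1
            obtain ⟨k, rfl⟩ : ∃ k, m = k + 1 := ⟨m - 1, by omega⟩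
            rw [List.take_succ_cons, List.drop_succ_cons, List.take_succ_cons, sv_cons]
            ring
          rw [Finset.sum_congr rfl key, ← Finset.mul_sum, ih (by simp)]
          simp only [List.take_succ_cons, List.take_nil, List.take_zero, List.drop_succ_cons, List.drop_nil, List.drop_zero]
          rw [sv_single, aw_cons, if_pos hcc]
          ring
        · exact fun x _ y _ hxy => by omega
        · intro hmem
          obtain ⟨k, hk, hk1⟩ := Finset.mem_image.mp hmem
          have := (mem_M.mp hk).1
          omega
      · rw [M_cons_lt l hcc, Finset.sum_singleton]
        simp only [List.take_succ_cons, List.take_zero, List.drop_succ_cons, List.drop_zero]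
        rw [sv_single, aw_cons, if_neg hcc]
        ring


abbrev V : Type := {v : List ℕ+ // v ≠ [] ∧ v.Chain' fun a b => b ≤ a}

/-- the pairs (v, w) weight -/
def pf (p : V × List ℕ+) : PS := sv p.1.1 * aw p.2

/-- fibers of the concatenation map are parametrized by `M u` -/
def fibEquiv (u : List ℕ+) :
    {m // m ∈ M u} ≃ {p : V × List ℕ+ // p.1.1 ++ p.2 = u} where
  toFun m := ⟨⟨⟨u.take m.1,
      ⟨by
        have h := mem_M.mp m.2
        apply List.ne_nil_of_length_pos
        rw [List.length_take]
        omega,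
       (mem_M.mp m.2).2.2⟩⟩, u.drop m.1⟩, List.take_append_drop _ _⟩
  invFun p := ⟨p.1.1.1.length, by
    obtain ⟨⟨⟨v, hv⟩, w⟩, hp⟩ := p
    simp only at hp ⊢
    subst hp
    refine mem_M.mpr ⟨List.length_pos_iff.mpr hv.1, by simp, ?_⟩
    rw [List.take_left]
    exact hv.2⟩
  left_inv m := by
    apply Subtype.ext
    simp only [List.length_take]
    have h := mem_M.mp m.2
    omega
  right_inv p := by
    obtain ⟨⟨⟨v, hv⟩, w⟩, hp⟩ := p
    simp only at hp
    subst hp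
    apply Subtype.ext
    simp only
    refine Prod.ext (Subtype.ext ?_) ?_
    · exact List.take_left
    · exact List.drop_left

lemma hfib (u : List ℕ+) (hu : u ≠ []) :
    HasSum (fun c : {p : V × List ℕ+ // p.1.1 ++ p.2 = u} => pf c.1) (aw u) := by
  have h1 : HasSum ((fun c : {p : V × List ℕ+ // p.1.1 ++ p.2 = u} => pf c.1) ∘ (fibEquiv u))
      (∑ m : {m // m ∈ M u}, sv (u.take m.1) * aw (u.drop m.1)) := hasSum_fintype _
  rw [Finset.sum_coe_sort (M u) (fun m => sv (u.take m) * aw (u.drop m)), core u hu] at h1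
  exact (Equiv.hasSum_iff (fibEquiv u)).mp h1

instance : IsEmpty {p : V × List ℕ+ // p.1.1 ++ p.2 = ([] : List ℕ+)} := by
  constructor
  rintro ⟨⟨⟨v, hv⟩, w⟩, hp⟩
  simp only [List.append_eq_nil_iff] at hp
  exact hv.1 hp.1

lemma summable_aw : Summable aw := by
  apply summable_of_coefFin
  intro d
  exact Set.Finite.subset (finite_bnd d) fun w hw => bnd_aw hw

lemma summable_sv : Summable (fun v : V => sv v.1) := by
  apply summable_of_coefFin
  intro d
  apply Set.Finite.subset ((finite_bnd d).preimage (Subtype.val_injective.injOn))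
  exact fun v hv => bnd_sv hv

lemma summable_pf : Summable pf := by
  apply summable_of_coefFin
  intro d
  apply Set.Finite.subset (((finite_bnd d).prod (finite_bnd d)).preimage
    (f := fun p : V × List ℕ+ => (p.1.1, p.2)) ?inj)
  case inj =>
    rintro ⟨⟨v, hv⟩, w⟩ - ⟨⟨v', hv'⟩, w'⟩ - h
    simp only [Prod.mk.injEq] at h
    simp [Prod.ext_iff, Subtype.ext_iff, h.1, h.2]
  intro p hp
  have hne : MvPowerSeries.coeff d (sv p.1.1 * aw p.2) ≠ 0 := hp
  rw [MvPowerSeries.coeff_mul] at hne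
  obtain ⟨q, hq, hq0⟩ := Finset.exists_ne_zero_of_sum_ne_zero hne
  rw [Finset.HasAntidiagonal.mem_antidiagonal] at hq
  obtain ⟨h1, h2⟩ := mul_ne_zero_iff.mp hq0
  constructor
  · exact bnd_mono (hq ▸ self_le_add_right q.1 q.2) (bnd_sv h1)
  · exact bnd_mono (hq ▸ self_le_add_left q.2 q.1) (bnd_aw h2)


lemma key_eq :
    (∑' v : V, sv v.1) * (∑' w, aw w) = (∑' w, aw w) - 1 := by
  classical
  have hF : HasSum aw (∑' w, aw w) := summable_aw.hasSum
  have hS : HasSum (fun v : V => sv v.1) (∑' v : V, sv v.1) := summable_sv.hasSum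
  obtain ⟨A, hA⟩ := summable_pf
  -- product of the two sums is the sum over pairs
  have hmul : HasSum (fun p : V × List ℕ+ => sv p.1.1 * aw p.2)
      ((∑' v : V, sv v.1) * (∑' w, aw w)) := hS.mul hF ⟨A, hA⟩
  have hSF : (∑' v : V, sv v.1) * (∑' w, aw w) = A := hmul.unique hA
  -- regroup the sum over pairs by concatenation
  have hsig : HasSum (pf ∘ (Equiv.sigmaFiberEquiv fun p : V × List ℕ+ => p.1.1 ++ p.2)) A :=
    (Equiv.hasSum_iff _).mpr hA
  have hg : HasSum (fun u : List ℕ+ => if u = [] then 0 else aw u) A := by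
    refine hsig.sigma fun u => ?_
    by_cases hu : u = []
    · subst hu
      rw [if_pos rfl]
      exact hasSum_empty
    · rw [if_neg hu]
      exact hfib u hu
  -- the regrouped sum is `∑' aw - 1`
  have h1 : HasSum (fun u : List ℕ+ => if u = [] then (1 : PS) else 0) 1 :=
    hasSum_ite_eq ([] : List ℕ+) 1
  have h2 : HasSum (fun u : List ℕ+ => aw u - if u = [] then 1 else 0) ((∑' w, aw w) - 1) :=
    hF.sub h1
  have h3 : (fun u : List ℕ+ => aw u - if u = [] then (1 : PS) else 0) =
      fun u : List ℕ+ => if u = [] then 0 else aw u := by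
    funext u
    by_cases hu : u = []
    · subst hu; simp [aw_nil]
    · simp [hu]
  rw [h3] at h2
  rw [hSF, hg.unique h2]

end LWD

/-- Theorem 2 (labeled weak descents):
`WD ⋅ (1 - Σ_{n≥1} t^n Σ_{v weakly decreasing, |v| = n} WDXZ(v)) = 1`, where
`WD = Σ_{w ∈ ℙ^*} t^{|w|} z̄^w ∏_{i≤j} x_{ji}^{ji(w)}`. -/
theorem labeled_weak_descents :
    (∑' w : List ℕ+, tt ^ w.length * zbar w * wdescFactor w) *
      (1 - ∑' v : {v : List ℕ+ // v ≠ [] ∧ v.Chain' fun a b => b ≤ a},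
          tt ^ v.1.length * WDXZ v.1) = 1 := by
  show (∑' w, LWD.aw w) * (1 - ∑' v : LWD.V, LWD.sv v.1) = 1
  have h := LWD.key_eq
  set F := ∑' w, LWD.aw w
  set S := ∑' v : LWD.V, LWD.sv v.1
  calc F * (1 - S) = F - S * F := by ring
    _ = F - (F - 1) := by rw [h]
    _ = 1 := by ring
end
end
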